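/- For every k ∈ ℕ, the set of integers n ∈ ℤ whose canonical Fibonacci representation rep_F(n) has length exactly 2k+1 equals I_k \ I_{k−1}, where I_k = {i ∈ ℤ : −F_{2k} ≤ i < F_{2k+1}} for k ≥ 0 and I_{−1} = ∅. -/

import Mathlib

/-- Fibonacci sequence with `F 0 = 1`, `F 1 = 1`, `F 2 = 2`. -/
def F : ℕ → ℤ
  | 0 => 1
  | 1 => 1
  | (n+2) => F (n+1) + F n

/-- Numerical value of a binary digit. -/
def bv (x : Bool) : ℤ := if x then 1 else 0

/-- Value of an odd-length binary word `w = w_{2k+1} ⋯ w_1` (most significant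
digit first): `val_F(w) = Σ_{i=1}^{2k} w_i F_i − w_{2k+1} F_{2k}`. -/
def valF (w : List Bool) : ℤ :=
  (∑ i ∈ Finset.range (w.length - 1), bv (w.reverse.getD i false) * F (i+1))
    - bv (w.reverse.getD (w.length - 1) false) * F (w.length - 1)

/-- The word has no factor `11`. -/
def no11 (w : List Bool) : Prop :=
  List.Chain' (fun x y => ¬(x = true ∧ y = true)) w

/-- Words of the canonical representation language: odd length, no factor 11,
not beginning with 000 nor with 101. -/
def IsRep (w : List Bool) : Prop :=
  Odd w.length ∧ no11 w ∧
    ¬ ([false, false, false] <+: w) ∧ ¬ ([true, false, true] <+: w)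

/-- `Ik k = {i ∈ ℤ : −F_{2k} ≤ i < F_{2k+1}}`. -/
def Ik (k : ℕ) : Set ℤ := {i : ℤ | -F (2*k) ≤ i ∧ i < F (2*k+1)}

/-- Shifted version of `Ik` incorporating `I_{−1} = ∅`. -/
def Iext : ℕ → Set ℤ
  | 0 => ∅
  | (k+1) => Ik k

/-- The morphism `h : 0 ↦ 00, 1 ↦ 01, 2 ↦ 10` on single letters. -/
def h3 : Fin 3 → List Bool
  | 0 => [false, false]
  | 1 => [false, true]
  | 2 => [true, false]


lemma F_pos : ∀ n, 0 < F n := by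
  intro n
  induction n using Nat.strong_induction_on with
  | _ n ih =>
    match n with
    | 0 => simp [F]
    | 1 => simp [F]
    | (m+2) =>
      have h1 := ih (m+1) (by omega)
      have h2 := ih m (by omega)
      rw [show F (m+2) = F (m+1) + F m from rfl]
      omega

lemma F_le_two (n : ℕ) : F n ≤ F (n+2) := by
  have := F_pos (n+1)
  rw [show F (n+2) = F (n+1) + F n from rfl]
  omega

lemma bv_nonneg (x : Bool) : 0 ≤ bv x := by cases x <;> simp [bv]

lemma bv_le_one (x : Bool) : bv x ≤ 1 := by cases x <;> simp [bv]

lemma term_nonneg (x : Bool) (n : ℕ) : 0 ≤ bv x * F n :=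
  mul_nonneg (bv_nonneg x) (le_of_lt (F_pos n))

lemma sum_nonneg' (d : ℕ → Bool) (m : ℕ) :
    0 ≤ ∑ i ∈ Finset.range m, bv (d i) * F (i+1) :=
  Finset.sum_nonneg fun i _ => term_nonneg _ _

lemma single_le (d : ℕ → Bool) (m j : ℕ) (hj : j < m) :
    bv (d j) * F (j+1) ≤ ∑ i ∈ Finset.range m, bv (d i) * F (i+1) :=
  Finset.single_le_sum (fun i _ => term_nonneg _ _) (Finset.mem_range.2 hj)

lemma sum_bound (d : ℕ → Bool) : ∀ m : ℕ,
    (∀ i, i+1 < m → ¬(d i = true ∧ d (i+1) = true)) →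
    (∑ i ∈ Finset.range m, bv (d i) * F (i+1)) ≤ F (m+1) - 1 := by
  intro m
  induction m using Nat.strong_induction_on with
  | _ m ih =>
    match m with
    | 0 => intro _; simp [F]
    | 1 =>
      intro _
      simp only [Finset.sum_range_one]
      have := bv_le_one (d 0)
      have h1 : F 1 = 1 := rfl
      have h2 : F 2 = 2 := rfl
      nlinarith [bv_nonneg (d 0)]
    | (m+2) =>
      intro hc
      rw [Finset.sum_range_succ]
      have hF : F (m+2+1) = F (m+2) + F (m+1) := rfl
      by_cases hd : d (m+1) = true
      · have hdm : d m = false := by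
          by_contra h
          exact hc m (by omega) ⟨by simpa using h, hd⟩
        rw [Finset.sum_range_succ, hdm, hd]
        have hih := ih m (by omega) (fun i hi => hc i (by omega))
        have hF2 : F (m+1+1) = F (m+1) + F m := rfl
        rw [show bv false = 0 from rfl, show bv true = 1 from rfl]
        linarith
      · have hd' : d (m+1) = false := by simpa using hd
        rw [hd']
        have hih := ih (m+1) (by omega) (fun i hi => hc i (by omega))
        have := F_pos (m+1)
        rw [show bv false = 0 from rfl]
        linarith

lemma rev_getD (w : List Bool) (i : ℕ) (h : i < w.length) :
    w.reverse.getD i false = w.getD (w.length - 1 - i) false := by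
  rw [List.getD_eq_getElem _ _ (by simpa using h),
      List.getD_eq_getElem _ _ (by omega), List.getElem_reverse]

lemma val_mem (w : List Bool) (k : ℕ) (hw : IsRep w) (hl : w.length = 2*k+1) :
    valF w ∈ Iext (k+1) \ Iext k := by
  obtain ⟨-, hno, h000, h101⟩ := hw
  set d : ℕ → Bool := fun i => w.reverse.getD i false with hd
  have hval : valF w
      = (∑ i ∈ Finset.range (2*k), bv (d i) * F (i+1)) - bv (d (2*k)) * F (2*k) := by
    simp [valF, hl, hd]
  have hchain : ∀ i, i + 1 < 2*k+1 → ¬(d i = true ∧ d (i+1) = true) := by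
    have hc : List.Chain' (fun x y : Bool => ¬(x = true ∧ y = true)) w.reverse := by
      rw [List.Chain', List.isChain_reverse]
      exact hno.imp (fun a b h => fun hp => h ⟨hp.2, hp.1⟩)
    rw [List.Chain', List.isChain_iff_getElem] at hc
    intro i hi
    have hL : w.reverse.length = 2*k+1 := by simp [hl]
    have h1 : i < w.reverse.length - 1 := by omega
    have := hc i (by omega)
    have e1 : d i = w.reverse[i]'(by omega) :=
      List.getD_eq_getElem _ _ (by omega)
    have e2 : d (i+1) = w.reverse[i+1]'(by omega) :=
      List.getD_eq_getElem _ _ (by omega)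
    rw [e1, e2]
    exact this
  have hS0 := sum_nonneg' d (2*k)
  have hS1 : (∑ i ∈ Finset.range (2*k), bv (d i) * F (i+1)) ≤ F (2*k+1) - 1 :=
    sum_bound d (2*k) (fun i hi => hchain i (by omega))
  have htop0 := term_nonneg (d (2*k)) (2*k)
  have htop1 : bv (d (2*k)) * F (2*k) ≤ F (2*k) := by
    have := bv_le_one (d (2*k))
    have := F_pos (2*k)
    nlinarith [bv_nonneg (d (2*k))]
  constructor
  · exact ⟨by rw [hval]; linarith, by rw [hval]; linarith [F_pos (2*k+1)]⟩
  · match k with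
    | 0 => simp [Iext]
    | (j+1) =>
      intro hmem
      obtain ⟨hm1, hm2⟩ := hmem
      obtain ⟨x, y, z, t, rfl⟩ : ∃ x y z t, w = x::y::z::t := by
        match w with
        | [] | [_] | [_,_] => simp at hl <;> omega
        | x::y::z::t => exact ⟨x,y,z,t,rfl⟩
      have hlt : t.length = 2*j := by simp at hl; omega
      have hx : d (2*j+2) = x := by
        show (x::y::z::t).reverse.getD (2*j+2) false = x
        rw [rev_getD _ _ (by rw [hl]; omega)]
        rw [show (x::y::z::t).length - 1 - (2*j+2) = 0 from by rw [hl]; omega]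
        rfl
      have hy : d (2*j+1) = y := by
        show (x::y::z::t).reverse.getD (2*j+1) false = y
        rw [rev_getD _ _ (by rw [hl]; omega)]
        rw [show (x::y::z::t).length - 1 - (2*j+1) = 1 from by rw [hl]; omega]
        rfl
      have hz : d (2*j) = z := by
        show (x::y::z::t).reverse.getD (2*j) false = z
        rw [rev_getD _ _ (by rw [hl]; omega)]
        rw [show (x::y::z::t).length - 1 - (2*j) = 2 from by rw [hl]; omega]
        rfl
      have h2k : 2*(j+1) = 2*j+2 := by ring
      cases hxv : x with
      | true =>
        have hyv : y = false := by
          have := hchain (2*j+1) (by omega)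
          rw [hy, hx, hxv] at this
          by_contra h
          exact this ⟨by simpa using h, rfl⟩
        have hzv : z = false := by
          by_contra h
          have hz' : z = true := by simpa using h
          exact h101 ⟨t, by rw [hxv, hyv, hz']; rfl⟩
        have hsplit : (∑ i ∈ Finset.range (2*j+2), bv (d i) * F (i+1))
            = ∑ i ∈ Finset.range (2*j), bv (d i) * F (i+1) := by
          rw [Finset.sum_range_succ, Finset.sum_range_succ, hy, hyv, hz, hzv]
          simp [bv]
        have hS1' : (∑ i ∈ Finset.range (2*j), bv (d i) * F (i+1)) ≤ F (2*j+1) - 1 :=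
          sum_bound d (2*j) (fun i hi => hchain i (by omega))
        have hvv : valF (x::y::z::t)
            = (∑ i ∈ Finset.range (2*j), bv (d i) * F (i+1)) - F (2*j+2) := by
          rw [hval, h2k, hsplit, hx, hxv]
          simp [bv]
        have hF1 : F (2*j+2) = F (2*j+1) + F (2*j) := rfl
        rw [hvv] at hm1
        rw [show 2*j = 2*j from rfl] at hm1
        linarith
      | false =>
        have hyz : y = true ∨ z = true := by
          cases hyv : y with
          | true => exact Or.inl rfl
          | false =>
            cases hzv : z with
            | true => exact Or.inr rfl
            | false => exact absurd ⟨t, by rw [hxv, hyv, hzv]; rfl⟩ h000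
        have hvS : valF (x::y::z::t)
            = ∑ i ∈ Finset.range (2*j+2), bv (d i) * F (i+1) := by
          rw [hval, h2k, hx, hxv]
          simp [bv]
        have hge : F (2*j+1) ≤ valF (x::y::z::t) := by
          rw [hvS]
          rcases hyz with hv | hv
          · have := single_le d (2*j+2) (2*j+1) (by omega)
            rw [hy, hv, show bv true = 1 from rfl] at this
            have hF1 : F (2*j+1+1) = F (2*j+1) + F (2*j) := rfl
            have := F_pos (2*j)
            linarith
          · have := single_le d (2*j+2) (2*j) (by omega)
            rw [hz, hv, show bv true = 1 from rfl] at this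
            linarith
        linarith

/-- Integers whose canonical representation has length exactly `2k+1` are those
in `I_k \ I_{k−1}`. -/
theorem level_sets (repF : ℤ → List Bool)
    (hrep : ∀ n : ℤ, IsRep (repF n) ∧ valF (repF n) = n) (k : ℕ) :
    {n : ℤ | (repF n).length = 2*k+1} = Iext (k+1) \ Iext k := by
  have mono : ∀ j : ℕ, Iext j ⊆ Iext (j+1) := by
    intro j
    match j with
    | 0 => simp [Iext]
    | (i+1) =>
      intro n hn
      have hn' : -F (2*i) ≤ n ∧ n < F (2*i+1) := hn
      obtain ⟨h1, h2⟩ := hn'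
      have ha := F_le_two (2*i)
      have hb := F_le_two (2*i+1)
      have e : 2*(i+1) = 2*i+2 := by ring
      show -F (2*(i+1)) ≤ n ∧ n < F (2*(i+1)+1)
      rw [e, show 2*i+2+1 = 2*i+1+2 from by omega]
      exact ⟨by linarith, by linarith⟩
  have mono' : Monotone Iext := monotone_nat_of_le_succ mono
  have key : ∀ n : ℤ, ∀ j : ℕ, (repF n).length = 2*j+1 → n ∈ Iext (j+1) \ Iext j := by
    intro n j hj
    have h := (hrep n).2
    have hv := val_mem (repF n) j (hrep n).1 hj
    rwa [h] at hv
  ext n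
  simp only [Set.mem_setOf_eq]
  constructor
  · intro h; exact key n k h
  · intro hn
    obtain ⟨m, hm⟩ := (hrep n).1.1
    have hm' : (repF n).length = 2*m+1 := by omega
    have hk := key n m hm'
    rcases lt_trichotomy m k with h | h | h
    · exact absurd (mono' (by omega : m+1 ≤ k) hk.1) hn.2
    · rw [h] at hm'; exact hm'
    · exact absurd (mono' (by omega : k+1 ≤ m) hn.1) hk.2
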